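/- Every spiky function λ: 2^{E_n} → ℕ is a connectivity function, i.e., it is normalised, symmetric, and submodular. -/

import Mathlib

/-- The ground set of a rank-`n` spike: `n` disjoint legs, where the leg `i` consists of
`x_i = (i, true)` and `y_i = (i, false)`. -/
abbrev En (n : ℕ) := Fin n × Bool

/-- The `i`-th leg `L_i = {x_i, y_i}`. -/
def leg (n : ℕ) (i : Fin n) : Set (En n) := {(i, true), (i, false)}

/-- A transversal: a set containing exactly one element of each leg. -/
def IsTransversal {n : ℕ} (X : Set (En n)) : Prop :=
  ∀ i : Fin n, ((i, true) ∈ X ∧ (i, false) ∉ X) ∨ ((i, true) ∉ X ∧ (i, false) ∈ X)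

/-- The hypercube graph `H_n` on transversals: two transversals are adjacent iff they
differ in exactly one element (i.e. their symmetric difference has two elements). -/
def Hn (n : ℕ) : SimpleGraph (Set (En n)) where
  Adj X Y := IsTransversal X ∧ IsTransversal Y ∧ (symmDiff X Y).ncard = 2
  symm := ⟨fun X Y ⟨h1, h2, h3⟩ => ⟨h2, h1, by rwa [symmDiff_comm]⟩⟩
  loopless := ⟨fun X ⟨_, _, h3⟩ => by
    simp [symmDiff_self, Set.bot_eq_empty] at h3⟩

/-- `I` is an independent set of the hypercube graph `H_n`. -/
def IndepInHn (n : ℕ) (I : Set (Set (En n))) : Prop :=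
  (∀ X ∈ I, IsTransversal X) ∧ ∀ X ∈ I, ∀ Y ∈ I, ¬ (Hn n).Adj X Y

/-- `l(X)`: the number of legs which `X` meets. -/
noncomputable def legCount {n : ℕ} (X : Set (En n)) : ℕ :=
  Set.ncard {i : Fin n | (i, true) ∈ X ∨ (i, false) ∈ X}

/-- The rank of a set `X` in a matroid `M`: the largest cardinality of an independent
subset of `X`. -/
noncomputable def mrank {α : Type*} (M : Matroid α) (X : Set α) : ℕ :=
  sSup {k | ∃ I, M.Indep I ∧ I ⊆ X ∧ I.ncard = k}

/-- The connectivity function of a matroid: μ_M(X) = r(X) + r(E−X) − r(E). -/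
noncomputable def mconn {α : Type*} (M : Matroid α) (X : Set α) : ℤ :=
  (mrank M X : ℤ) + (mrank M (M.E \ X) : ℤ) - (mrank M M.E : ℤ)

/-- A circuit of a matroid: a minimal dependent subset of the ground set. -/
def IsCircuit {α : Type*} (M : Matroid α) (C : Set α) : Prop :=
  C ⊆ M.E ∧ ¬ M.Indep C ∧ ∀ D ⊂ C, M.Indep D

/-- The circuits `{x_i, y_i, x_j, y_j}` for `i < j` (i.e. unions of two distinct legs). -/
def LegPairs (n : ℕ) : Set (Set (En n)) :=
  {C | ∃ i j : Fin n, i ≠ j ∧ C = leg n i ∪ leg n j}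

/-- The circuit collection of the spike `S(I)`: unions of two legs, the transversals
in `I`, and all `(n+1)`-element sets containing none of the preceding circuits. -/
def SpikeCircuits (n : ℕ) (I : Set (Set (En n))) : Set (Set (En n)) :=
  (LegPairs n ∪ I) ∪ {C | C.ncard = n + 1 ∧ ∀ D ∈ LegPairs n ∪ I, ¬ D ⊆ C}

open Classical in
/-- The rank function of the free spike `S(∅)` (every rank-`n` spike has this rank
function away from the transversals). -/
noncomputable def freeSpikeRank (n : ℕ) (X : Set (En n)) : ℕ :=
  if ∀ i : Fin n, ¬ Disjoint (leg n i) X then n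
  else if ∃ i, leg n i ⊆ X then legCount X + 1
  else X.ncard

/-- `λ_n(X) = r_n(X) + r_n(E_n − X) − n`: the common value of the connectivity function
of any rank-`n` spike on a non-transversal set `X`. -/
noncomputable def lamN (n : ℕ) (X : Set (En n)) : ℤ :=
  (freeSpikeRank n X : ℤ) + (freeSpikeRank n Xᶜ : ℤ) - (n : ℤ)

/-- A spiky function: symmetric, extends `λ_n` on non-transversals, takes values in
`{n−2, n−1, n}` on transversals, and satisfies `λ(X) + λ(Y) ≥ 2n−2` for transversals
`X`, `Y` differing in exactly one element. -/
noncomputable def IsSpiky (n : ℕ) (lam : Set (En n) → ℕ) : Prop :=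
  (∀ X, lam X = lam Xᶜ) ∧
  (∀ X, ¬ IsTransversal X → (lam X : ℤ) = lamN n X) ∧
  (∀ X, IsTransversal X → lam X = n - 2 ∨ lam X = n - 1 ∨ lam X = n) ∧
  (∀ X Y, IsTransversal X → IsTransversal Y → (symmDiff X Y).ncard = 2 →
    2 * n - 2 ≤ lam X + lam Y)

section Aux
open Classical
variable {n : ℕ}

def SplitL (X : Set (En n)) (i : Fin n) : Prop :=
  ((i, true) ∈ X ∧ (i, false) ∉ X) ∨ ((i, true) ∉ X ∧ (i, false) ∈ X)

def FullL (X : Set (En n)) (i : Fin n) : Prop := (i, true) ∈ X ∧ (i, false) ∈ X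

def EmptL (X : Set (En n)) (i : Fin n) : Prop := (i, true) ∉ X ∧ (i, false) ∉ X

def OppL (X Y : Set (En n)) (i : Fin n) : Prop :=
  ((i, true) ∈ X ∧ (i, false) ∉ X ∧ (i, true) ∉ Y ∧ (i, false) ∈ Y) ∨
  ((i, true) ∉ X ∧ (i, false) ∈ X ∧ (i, true) ∈ Y ∧ (i, false) ∉ Y)

open Classical in
noncomputable def cInd (P : Prop) : ℤ := if P then 1 else 0

lemma cInd_nonneg (P : Prop) : 0 ≤ cInd P := by
  unfold cInd; split <;> norm_num

noncomputable def cc (X : Set (En n)) : ℤ := ∑ i, cInd (SplitL X i)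
noncomputable def fcount (X : Set (En n)) : ℤ := ∑ i, cInd (FullL X i)
noncomputable def ecount (X : Set (En n)) : ℤ := ∑ i, cInd (EmptL X i)
noncomputable def dd (X Y : Set (En n)) : ℤ := ∑ i, cInd (OppL X Y i)

lemma ncard_toSum (P : Fin n → Prop) : ({i | P i}.ncard : ℤ) = ∑ i, cInd (P i) := by
  classical
  rw [Set.ncard_eq_toFinset_card', Set.toFinset_setOf, Finset.card_filter]
  push_cast
  exact Finset.sum_congr rfl fun i _ => by by_cases h : P i <;> simp [cInd, h]

lemma ncard_en (X : Set (En n)) :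
    (X.ncard : ℤ) = ∑ i, (cInd ((i, true) ∈ X) + cInd ((i, false) ∈ X)) := by
  classical
  have h0 : X = {p : En n | p ∈ X} := rfl
  rw [h0, Set.ncard_eq_toFinset_card', Set.toFinset_setOf, Finset.card_filter]
  push_cast
  rw [Fintype.sum_prod_type]
  refine Finset.sum_congr rfl fun i _ => ?_
  rw [Fintype.sum_bool]
  by_cases h1 : (i, true) ∈ X <;> by_cases h2 : (i, false) ∈ X <;>
    simp [cInd, h1, h2]

lemma cfe_sum (X : Set (En n)) : cc X + fcount X + ecount X = n := by
  unfold cc fcount ecount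
  rw [← Finset.sum_add_distrib, ← Finset.sum_add_distrib]
  have : ∀ i : Fin n, cInd (SplitL X i) + cInd (FullL X i) + cInd (EmptL X i) = 1 := by
    intro i
    by_cases h1 : (i, true) ∈ X <;> by_cases h2 : (i, false) ∈ X <;>
      simp [cInd, SplitL, FullL, EmptL, h1, h2]
  rw [Finset.sum_congr rfl fun i _ => this i]
  simp

lemma legCount_eq (X : Set (En n)) : (legCount X : ℤ) = cc X + fcount X := by
  unfold legCount
  rw [ncard_toSum]
  unfold cc fcount
  rw [← Finset.sum_add_distrib]
  refine Finset.sum_congr rfl fun i _ => ?_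
  by_cases h1 : (i, true) ∈ X <;> by_cases h2 : (i, false) ∈ X <;>
    simp [cInd, SplitL, FullL, h1, h2]

lemma ncard_cc (X : Set (En n)) : (X.ncard : ℤ) = cc X + 2 * fcount X := by
  rw [ncard_en]
  unfold cc fcount
  rw [Finset.mul_sum, ← Finset.sum_add_distrib]
  refine Finset.sum_congr rfl fun i _ => ?_
  by_cases h1 : (i, true) ∈ X <;> by_cases h2 : (i, false) ∈ X <;>
    simp [cInd, SplitL, FullL, h1, h2]

lemma splitL_compl (X : Set (En n)) (i : Fin n) : SplitL Xᶜ i ↔ SplitL X i := by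
  simp [SplitL]; tauto

lemma fullL_compl (X : Set (En n)) (i : Fin n) : FullL Xᶜ i ↔ EmptL X i := by
  simp [FullL, EmptL]

lemma emptL_compl (X : Set (En n)) (i : Fin n) : EmptL Xᶜ i ↔ FullL X i := by
  simp [FullL, EmptL]

lemma cc_compl (X : Set (En n)) : cc Xᶜ = cc X :=
  Finset.sum_congr rfl fun i _ => by rw [cInd]; rw [cInd]; simp [splitL_compl]

lemma fcount_compl (X : Set (En n)) : fcount Xᶜ = ecount X :=
  Finset.sum_congr rfl fun i _ => by rw [cInd]; rw [cInd]; simp [fullL_compl]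

lemma sum_pos_of_exists {P : Fin n → Prop} (h : ∃ i, P i) : 1 ≤ ∑ i, cInd (P i) := by
  obtain ⟨i, hi⟩ := h
  have : cInd (P i) = 1 := by simp [cInd, hi]
  calc (1 : ℤ) = cInd (P i) := this.symm
    _ ≤ ∑ j, cInd (P j) :=
      Finset.single_le_sum (fun j _ => cInd_nonneg _) (Finset.mem_univ i)

lemma sum_zero_of_not_exists {P : Fin n → Prop} (h : ¬ ∃ i, P i) : ∑ i, cInd (P i) = 0 := by
  push_neg at h
  exact Finset.sum_eq_zero fun i _ => by simp [cInd, h i]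

lemma cond1_iff (X : Set (En n)) :
    (∀ i : Fin n, ¬ Disjoint (leg n i) X) ↔ ¬ ∃ i, EmptL X i := by
  push_neg
  refine forall_congr' fun i => ?_
  rw [Set.not_disjoint_iff]
  constructor
  · rintro ⟨a, ha, hx⟩
    rcases Set.mem_insert_iff.1 ha with rfl | h
    · simp [EmptL]; tauto
    · rw [Set.mem_singleton_iff] at h; subst h; simp [EmptL]; tauto
  · intro h
    rcases Classical.em ((i, true) ∈ X) with ht | ht
    · exact ⟨(i, true), by simp [leg], ht⟩
    · refine ⟨(i, false), by simp [leg], ?_⟩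
      by_contra hf
      exact h ⟨ht, hf⟩

lemma cond2_iff (X : Set (En n)) : (∃ i, leg n i ⊆ X) ↔ ∃ i, FullL X i := by
  refine exists_congr fun i => ?_
  simp [leg, Set.insert_subset_iff, FullL]

lemma fsr_eval (X : Set (En n)) :
    (freeSpikeRank n X : ℤ) =
      if ∃ i, EmptL X i then (if ∃ i, FullL X i then cc X + fcount X + 1 else cc X) else n := by
  classical
  unfold freeSpikeRank
  by_cases hE : ∃ i, EmptL X i
  · rw [if_neg (by rw [cond1_iff]; exact not_not.2 hE), if_pos hE]
    by_cases hF : ∃ i, FullL X i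
    · rw [if_pos ((cond2_iff X).2 hF), if_pos hF]
      push_cast
      rw [legCount_eq]
    · rw [if_neg (fun h => hF ((cond2_iff X).1 h)), if_neg hF]
      rw [ncard_cc, show fcount X = 0 from sum_zero_of_not_exists hF]
      ring
  · rw [if_pos ((cond1_iff X).2 hE), if_neg hE]

open Classical in
noncomputable def ind2 (P : Prop) : ℤ := if P then 2 else 0

lemma ind2_pos {P : Prop} (h : P) : ind2 P = 2 := by unfold ind2; exact if_pos h
lemma ind2_neg {P : Prop} (h : ¬ P) : ind2 P = 0 := by unfold ind2; exact if_neg h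
lemma ind2_nonneg (P : Prop) : 0 ≤ ind2 P := by unfold ind2; split <;> norm_num
lemma ind2_le (P : Prop) : ind2 P ≤ 2 := by unfold ind2; split <;> norm_num

noncomputable def gg (X : Set (En n)) : ℤ :=
  cc X + ind2 ((∃ i, FullL X i) ∧ (∃ i, EmptL X i))

lemma not_split_iff (X : Set (En n)) (i : Fin n) :
    ¬ SplitL X i ↔ FullL X i ∨ EmptL X i := by
  by_cases h1 : (i, true) ∈ X <;> by_cases h2 : (i, false) ∈ X <;>
    simp [SplitL, FullL, EmptL, h1, h2]

lemma transversal_iff (X : Set (En n)) : IsTransversal X ↔ ∀ i, SplitL X i := Iff.rfl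

lemma lamN_eq_gg (X : Set (En n)) (h : ¬ IsTransversal X) : lamN n X = gg X := by
  classical
  have hne : (∃ i, FullL X i) ∨ (∃ i, EmptL X i) := by
    rw [transversal_iff] at h
    push_neg at h
    obtain ⟨i, hi⟩ := h
    rcases (not_split_iff X i).1 hi with hf | he
    · exact Or.inl ⟨i, hf⟩
    · exact Or.inr ⟨i, he⟩
  have hsum := cfe_sum X
  unfold lamN gg
  rw [fsr_eval, fsr_eval]
  simp only [fullL_compl, emptL_compl, cc_compl,
    show (∃ i, FullL Xᶜ i) ↔ (∃ i, EmptL X i) from exists_congr (fullL_compl X),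
    show (∃ i, EmptL Xᶜ i) ↔ (∃ i, FullL X i) from exists_congr (emptL_compl X)]
  have hfc : fcount Xᶜ = ecount X := fcount_compl X
  by_cases hF : ∃ i, FullL X i <;> by_cases hE : ∃ i, EmptL X i
  · rw [if_pos hE, if_pos hF, if_pos hF, if_pos hE, ind2_pos ⟨hF, hE⟩, hfc]
    linarith
  · rw [if_neg hE, if_pos hF, if_neg hE, ind2_neg (by tauto)]
    have : ecount X = 0 := sum_zero_of_not_exists hE
    linarith
  · rw [if_pos hE, if_neg hF, if_neg hF, ind2_neg (by tauto)]
    have : fcount X = 0 := sum_zero_of_not_exists hF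
    linarith
  · tauto

lemma cc_trans {X : Set (En n)} (hX : IsTransversal X) : cc X = n := by
  unfold cc
  rw [Finset.sum_congr rfl fun i _ => (by unfold cInd; exact if_pos (hX i) : cInd (SplitL X i) = 1)]
  simp

lemma gg_trans {X : Set (En n)} (hX : IsTransversal X) : gg X = n := by
  unfold gg
  rw [cc_trans hX, ind2_neg, add_zero]
  rintro ⟨⟨i, hf⟩, -⟩
  rcases hX i with ⟨h1, h2⟩ | ⟨h1, h2⟩
  · exact h2 hf.2
  · exact h1 hf.1

lemma cc_submod (X Y : Set (En n)) :
    cc (X ∪ Y) + cc (X ∩ Y) + 2 * dd X Y = cc X + cc Y := by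
  unfold cc dd
  rw [Finset.mul_sum, ← Finset.sum_add_distrib, ← Finset.sum_add_distrib,
    ← Finset.sum_add_distrib]
  refine Finset.sum_congr rfl fun i _ => ?_
  by_cases h1 : (i, true) ∈ X <;> by_cases h2 : (i, false) ∈ X <;>
    by_cases h3 : (i, true) ∈ Y <;> by_cases h4 : (i, false) ∈ Y <;>
    simp [cInd, SplitL, OppL, Set.mem_union, Set.mem_inter_iff, h1, h2, h3, h4]

lemma emptL_union {X Y : Set (En n)} {i : Fin n} (h : EmptL (X ∪ Y) i) :
    EmptL X i ∧ EmptL Y i := by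
  simp [EmptL, Set.mem_union] at h ⊢; tauto

lemma fullL_inter {X Y : Set (En n)} {i : Fin n} (h : FullL (X ∩ Y) i) :
    FullL X i ∧ FullL Y i := by
  simp [FullL, Set.mem_inter_iff] at h ⊢; tauto

lemma fullL_union {X Y : Set (En n)} {i : Fin n} (h : FullL (X ∪ Y) i)
    (ho : ¬ OppL X Y i) : FullL X i ∨ FullL Y i := by
  simp [FullL, Set.mem_union] at h ⊢
  simp [OppL] at ho
  tauto

lemma emptL_inter {X Y : Set (En n)} {i : Fin n} (h : EmptL (X ∩ Y) i)
    (ho : ¬ OppL X Y i) : EmptL X i ∨ EmptL Y i := by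
  simp [EmptL, Set.mem_inter_iff] at h ⊢
  simp [OppL] at ho
  tauto

lemma ind_helper1 {Au Bu Aw Bw Ax Bx Ay By : Prop} {d : ℤ}
    (h1 : Bu → Bx ∧ By) (h2 : Aw → Ax ∧ Ay) (hd : 1 ≤ d) :
    ind2 (Au ∧ Bu) + ind2 (Aw ∧ Bw) ≤ ind2 (Ax ∧ Bx) + ind2 (Ay ∧ By) + 2 * d := by
  have e : ∀ P : Prop, (P ∧ ind2 P = 2) ∨ (¬ P ∧ ind2 P = 0) := by
    intro P
    by_cases h : P
    · exact Or.inl ⟨h, ind2_pos h⟩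
    · exact Or.inr ⟨h, ind2_neg h⟩
  rcases e (Au ∧ Bu) with ⟨c1, e1⟩ | ⟨c1, e1⟩ <;>
    rcases e (Aw ∧ Bw) with ⟨c2, e2⟩ | ⟨c2, e2⟩ <;>
    rcases e (Ax ∧ Bx) with ⟨c3, e3⟩ | ⟨c3, e3⟩ <;>
    rcases e (Ay ∧ By) with ⟨c4, e4⟩ | ⟨c4, e4⟩ <;>
    rw [e1, e2, e3, e4] <;> first | linarith | (exfalso; tauto)

lemma ind_helper0 {Au Bu Aw Bw Ax Bx Ay By : Prop}
    (h1 : Bu → Bx ∧ By) (h2 : Aw → Ax ∧ Ay) (h3 : Au → Ax ∨ Ay) (h4 : Bw → Bx ∨ By) :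
    ind2 (Au ∧ Bu) + ind2 (Aw ∧ Bw) ≤ ind2 (Ax ∧ Bx) + ind2 (Ay ∧ By) := by
  have e : ∀ P : Prop, (P ∧ ind2 P = 2) ∨ (¬ P ∧ ind2 P = 0) := by
    intro P
    by_cases h : P
    · exact Or.inl ⟨h, ind2_pos h⟩
    · exact Or.inr ⟨h, ind2_neg h⟩
  rcases e (Au ∧ Bu) with ⟨c1, e1⟩ | ⟨c1, e1⟩ <;>
    rcases e (Aw ∧ Bw) with ⟨c2, e2⟩ | ⟨c2, e2⟩ <;>
    rcases e (Ax ∧ Bx) with ⟨c3, e3⟩ | ⟨c3, e3⟩ <;>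
    rcases e (Ay ∧ By) with ⟨c4, e4⟩ | ⟨c4, e4⟩ <;>
    rw [e1, e2, e3, e4] <;> first | linarith | (exfalso; tauto)

lemma dd_nonneg (X Y : Set (En n)) : 0 ≤ dd X Y :=
  Finset.sum_nonneg fun i _ => cInd_nonneg _

set_option maxHeartbeats 1000000 in
lemma gg_submod (X Y : Set (En n)) : gg (X ∪ Y) + gg (X ∩ Y) ≤ gg X + gg Y := by
  classical
  have hcc := cc_submod X Y
  have hBu : (∃ i, EmptL (X ∪ Y) i) → (∃ i, EmptL X i) ∧ (∃ i, EmptL Y i) := by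
    rintro ⟨i, hi⟩
    exact ⟨⟨i, (emptL_union hi).1⟩, ⟨i, (emptL_union hi).2⟩⟩
  have hAw : (∃ i, FullL (X ∩ Y) i) → (∃ i, FullL X i) ∧ (∃ i, FullL Y i) := by
    rintro ⟨i, hi⟩
    exact ⟨⟨i, (fullL_inter hi).1⟩, ⟨i, (fullL_inter hi).2⟩⟩
  have key : ind2 ((∃ i, FullL (X ∪ Y) i) ∧ (∃ i, EmptL (X ∪ Y) i)) +
      ind2 ((∃ i, FullL (X ∩ Y) i) ∧ (∃ i, EmptL (X ∩ Y) i)) ≤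
      ind2 ((∃ i, FullL X i) ∧ (∃ i, EmptL X i)) +
      ind2 ((∃ i, FullL Y i) ∧ (∃ i, EmptL Y i)) + 2 * dd X Y := by
    by_cases hO : ∃ i, OppL X Y i
    · exact ind_helper1 hBu hAw (sum_pos_of_exists hO)
    · push_neg at hO
      have hAu : (∃ i, FullL (X ∪ Y) i) → (∃ i, FullL X i) ∨ (∃ i, FullL Y i) := by
        rintro ⟨i, hi⟩
        rcases fullL_union hi (hO i) with h | h
        · exact Or.inl ⟨i, h⟩
        · exact Or.inr ⟨i, h⟩
      have hBw : (∃ i, EmptL (X ∩ Y) i) → (∃ i, EmptL X i) ∨ (∃ i, EmptL Y i) := by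
        rintro ⟨i, hi⟩
        rcases emptL_inter hi (hO i) with h | h
        · exact Or.inl ⟨i, h⟩
        · exact Or.inr ⟨i, h⟩
      have := ind_helper0 hBu hAw hAu hBw
      have := dd_nonneg X Y
      linarith
  unfold gg
  linarith

lemma trans_subset_eq {X U : Set (En n)} (hX : IsTransversal X) (hU : IsTransversal U)
    (hsub : X ⊆ U) : X = U := by
  apply Set.Subset.antisymm hsub
  rintro ⟨i, b⟩ hb
  have k1 : (i, true) ∈ X → (i, true) ∈ U := fun h => hsub h
  have k2 : (i, false) ∈ X → (i, false) ∈ U := fun h => hsub h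
  rcases hX i with ⟨h1, h2⟩ | ⟨h1, h2⟩ <;> rcases hU i with ⟨g1, g2⟩ | ⟨g1, g2⟩ <;>
    cases b <;> tauto

lemma trans_eq_of_no_opp {X Y : Set (En n)} (hX : IsTransversal X) (hY : IsTransversal Y)
    (h : ¬ ∃ i, OppL X Y i) : X = Y := by
  push_neg at h
  ext ⟨i, b⟩
  have hi := h i
  simp only [OppL] at hi
  rcases hX i with ⟨h1, h2⟩ | ⟨h1, h2⟩ <;> rcases hY i with ⟨g1, g2⟩ | ⟨g1, g2⟩ <;>
    cases b <;> (try simp) <;> tauto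

lemma symm_card {X Y : Set (En n)} (hX : IsTransversal X) (hY : IsTransversal Y) :
    ((symmDiff X Y).ncard : ℤ) = 2 * dd X Y := by
  rw [ncard_en]
  unfold dd
  rw [Finset.mul_sum]
  refine Finset.sum_congr rfl fun i _ => ?_
  rcases hX i with ⟨h1, h2⟩ | ⟨h1, h2⟩ <;> rcases hY i with ⟨h3, h4⟩ | ⟨h3, h4⟩ <;>
    simp [cInd, OppL, Set.mem_symmDiff, h1, h2, h3, h4]

lemma trans_no_full {X : Set (En n)} (hX : IsTransversal X) : ¬ ∃ i, FullL X i := by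
  rintro ⟨i, hf⟩
  rcases hX i with ⟨h1, h2⟩ | ⟨h1, h2⟩
  · exact h2 hf.2
  · exact h1 hf.1

lemma trans_no_empt {X : Set (En n)} (hX : IsTransversal X) : ¬ ∃ i, EmptL X i := by
  rintro ⟨i, hf⟩
  rcases hX i with ⟨h1, h2⟩ | ⟨h1, h2⟩
  · exact hf.1 h1
  · exact hf.2 h2

end Aux

section Main
variable {n : ℕ}

lemma lam_trans_ge (hn : 2 < n) {lam : Set (En n) → ℕ} (hs : IsSpiky n lam)
    {Z : Set (En n)} (hZ : IsTransversal Z) : (n : ℤ) - 2 ≤ (lam Z : ℤ) := by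
  rcases hs.2.2.1 Z hZ with h | h | h <;> omega

lemma lam_trans_le {lam : Set (En n) → ℕ} (hs : IsSpiky n lam)
    {Z : Set (En n)} (hZ : IsTransversal Z) : (lam Z : ℤ) ≤ (n : ℤ) := by
  rcases hs.2.2.1 Z hZ with h | h | h <;> omega

lemma lam_eq_gg {lam : Set (En n) → ℕ} (hs : IsSpiky n lam)
    {Z : Set (En n)} (hZ : ¬ IsTransversal Z) : (lam Z : ℤ) = gg Z :=
  (hs.2.1 Z hZ).trans (lamN_eq_gg Z hZ)

lemma lam_le_gg {lam : Set (En n) → ℕ} (hs : IsSpiky n lam) (Z : Set (En n)) :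
    (lam Z : ℤ) ≤ gg Z := by
  by_cases hZ : IsTransversal Z
  · rw [gg_trans hZ]
    exact lam_trans_le hs hZ
  · exact le_of_eq (lam_eq_gg hs hZ)

lemma not_trans_union {X Y : Set (En n)} (hX : IsTransversal X) (hYX : ¬ Y ⊆ X) :
    ¬ IsTransversal (X ∪ Y) := by
  intro h
  have hXU := trans_subset_eq hX h Set.subset_union_left
  exact hYX (by rw [hXU]; exact Set.subset_union_right)

lemma not_trans_inter {X Y : Set (En n)} (hX : IsTransversal X) (hXY : ¬ X ⊆ Y) :
    ¬ IsTransversal (X ∩ Y) := by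
  intro h
  have hXW := trans_subset_eq h hX Set.inter_subset_left
  exact hXY (by rw [← hXW]; exact Set.inter_subset_right)

lemma ind2_union_zero {X Y : Set (En n)} (hX : IsTransversal X) :
    ind2 ((∃ i, FullL (X ∪ Y) i) ∧ (∃ i, EmptL (X ∪ Y) i)) = 0 := by
  apply ind2_neg
  rintro ⟨-, i, hi⟩
  exact trans_no_empt hX ⟨i, (emptL_union hi).1⟩

lemma ind2_inter_zero {X Y : Set (En n)} (hX : IsTransversal X) :
    ind2 ((∃ i, FullL (X ∩ Y) i) ∧ (∃ i, EmptL (X ∩ Y) i)) = 0 := by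
  apply ind2_neg
  rintro ⟨⟨i, hi⟩, -⟩
  exact trans_no_full hX ⟨i, (fullL_inter hi).1⟩

lemma case_mixed (hn : 2 < n) (lam : Set (En n) → ℕ) (hs : IsSpiky n lam)
    (X Y : Set (En n)) (hX : IsTransversal X) (hY : ¬ IsTransversal Y)
    (hXY : ¬ X ⊆ Y) (hYX : ¬ Y ⊆ X) :
    (lam (X ∪ Y) : ℤ) + (lam (X ∩ Y) : ℤ) ≤ (lam X : ℤ) + (lam Y : ℤ) := by
  have hu := not_trans_union hX hYX
  have hw := not_trans_inter hX hXY
  have hlu := lam_eq_gg hs hu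
  have hlw := lam_eq_gg hs hw
  have hlY := lam_eq_gg hs hY
  have hu0 := ind2_union_zero (Y := Y) hX
  have hw0 := ind2_inter_zero (Y := Y) hX
  have hcc := cc_submod X Y
  have hccX := cc_trans hX
  have hlamX := lam_trans_ge hn hs hX
  have key : (2 : ℤ) ≤ 2 * dd X Y + ind2 ((∃ i, FullL Y i) ∧ (∃ i, EmptL Y i)) := by
    by_cases hO : ∃ i, OppL X Y i
    · have h1 := sum_pos_of_exists hO
      have h2 := ind2_nonneg ((∃ i, FullL Y i) ∧ (∃ i, EmptL Y i))
      unfold dd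
      linarith
    · push_neg at hO
      by_cases hFY : (∃ i, FullL Y i) ∧ (∃ i, EmptL Y i)
      · rw [ind2_pos hFY]
        have := dd_nonneg X Y
        linarith
      · exfalso
        rcases not_and_or.1 hFY with hF | hE
        · apply hYX
          rintro ⟨i, b⟩ hb
          have hOi := hO i
          simp only [OppL] at hOi
          have hFi : ¬ FullL Y i := (not_exists.1 hF) i
          simp only [FullL] at hFi
          rcases hX i with ⟨h1, h2⟩ | ⟨h1, h2⟩ <;> cases b <;> tauto
        · apply hXY
          rintro ⟨i, b⟩ hb
          have hOi := hO i
          simp only [OppL] at hOi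
          have hEi : ¬ EmptL Y i := (not_exists.1 hE) i
          simp only [EmptL] at hEi
          rcases hX i with ⟨h1, h2⟩ | ⟨h1, h2⟩ <;> cases b <;> tauto
  rw [hlu, hlw, hlY]
  unfold gg
  rw [hu0, hw0]
  linarith

lemma case_both (hn : 2 < n) (lam : Set (En n) → ℕ) (hs : IsSpiky n lam)
    (X Y : Set (En n)) (hX : IsTransversal X) (hY : IsTransversal Y)
    (hXY : ¬ X ⊆ Y) (hYX : ¬ Y ⊆ X) :
    (lam (X ∪ Y) : ℤ) + (lam (X ∩ Y) : ℤ) ≤ (lam X : ℤ) + (lam Y : ℤ) := by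
  have hne : X ≠ Y := fun h => hXY (h ▸ subset_rfl)
  have hO : ∃ i, OppL X Y i := by
    by_contra h
    exact hne (trans_eq_of_no_opp hX hY h)
  have hd1 : 1 ≤ dd X Y := sum_pos_of_exists hO
  have hu := not_trans_union hX hYX
  have hw := not_trans_inter hX hXY
  have hlu := lam_eq_gg hs hu
  have hlw := lam_eq_gg hs hw
  have hu0 := ind2_union_zero (Y := Y) hX
  have hw0 := ind2_inter_zero (Y := Y) hX
  have hcc := cc_submod X Y
  have hccX := cc_trans hX
  have hccY := cc_trans hY
  rw [hlu, hlw]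
  unfold gg
  rw [hu0, hw0]
  by_cases hdd : dd X Y = 1
  · have hsd : (symmDiff X Y).ncard = 2 := by
      have h2 := symm_card hX hY
      rw [hdd] at h2
      exact_mod_cast h2
    have h4 := hs.2.2.2 X Y hX hY hsd
    have h4' : (2 * n : ℤ) - 2 ≤ (lam X : ℤ) + (lam Y : ℤ) := by omega
    linarith
  · have hd2 : 2 ≤ dd X Y := by omega
    have hgX := lam_trans_ge hn hs hX
    have hgY := lam_trans_ge hn hs hY
    linarith

end Main

/-- Every spiky function is a connectivity function: normalised, symmetric, submodular. -/
theorem stmt10 {n : ℕ} (hn : 2 < n) (lam : Set (En n) → ℕ) (hs : IsSpiky n lam) :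
    lam ∅ = 0 ∧
    (∀ X, lam X = lam Xᶜ) ∧
    (∀ X Y, lam (X ∪ Y) + lam (X ∩ Y) ≤ lam X + lam Y) := by
  refine ⟨?_, hs.1, ?_⟩
  · have hne : ¬ IsTransversal (∅ : Set (En n)) := by
      intro h
      rcases h ⟨0, by omega⟩ with ⟨h1, -⟩ | ⟨-, h1⟩ <;> simp at h1
    have h0 : (lam ∅ : ℤ) = gg (∅ : Set (En n)) := lam_eq_gg hs hne
    have hgg : gg (∅ : Set (En n)) = 0 := by
      unfold gg
      rw [ind2_neg (by rintro ⟨⟨i, hi⟩, -⟩; simp [FullL] at hi)]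
      have : cc (∅ : Set (En n)) = 0 :=
        Finset.sum_eq_zero fun i _ => by simp [cInd, SplitL]
      linarith
    rw [hgg] at h0
    exact_mod_cast h0
  · intro X Y
    have goalZ : (lam (X ∪ Y) : ℤ) + (lam (X ∩ Y) : ℤ) ≤ (lam X : ℤ) + (lam Y : ℤ) := by
      by_cases hXY : X ⊆ Y
      · rw [Set.union_eq_self_of_subset_left hXY, Set.inter_eq_self_of_subset_left hXY]
        linarith
      by_cases hYX : Y ⊆ X
      · rw [Set.union_eq_self_of_subset_right hYX, Set.inter_eq_self_of_subset_right hYX]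
      by_cases hX : IsTransversal X <;> by_cases hY : IsTransversal Y
      · exact case_both hn lam hs X Y hX hY hXY hYX
      · exact case_mixed hn lam hs X Y hX hY hXY hYX
      · rw [Set.union_comm, Set.inter_comm]
        have := case_mixed hn lam hs Y X hY hX hYX hXY
        linarith
      · have h1 := lam_le_gg hs (X ∪ Y)
        have h2 := lam_le_gg hs (X ∩ Y)
        have h3 := gg_submod X Y
        have h4 := lam_eq_gg hs hX
        have h5 := lam_eq_gg hs hY
        linarith
    exact_mod_cast goalZ
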